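/- For any bitstring y of length 2n+1 with exactly n+1 ones (n ≥ 1), there is a unique integer ℓ with 0 ≤ ℓ ≤ 2n such that the last 2n bits of the cyclic left-rotation of y by ℓ positions form a Dyck word. -/

import Mathlib

/-- A Dyck word: a binary string (1 = `true`, 0 = `false`) with equally many 1s and 0s such
that every prefix has at least as many 1s as 0s. -/
def IsDyck (w : List Bool) : Prop :=
  w.count false = w.count true ∧ ∀ k, (w.take k).count false ≤ (w.take k).count true

/-- Balance of a boolean word: number of `true`s minus number of `false`s, as an integer. -/
def bal (w : List Bool) : ℤ := (w.count true : ℤ) - (w.count false : ℤ)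

lemma bal_append (a b : List Bool) : bal (a ++ b) = bal a + bal b := by
  simp [bal, List.count_append]; ring

lemma count_true_add_count_false (w : List Bool) :
    w.count true + w.count false = w.length := by
  induction w with
  | nil => simp
  | cons b t ih => cases b <;> simp [List.count_cons] <;> omega

lemma isDyck_iff_bal (w : List Bool) :
    IsDyck w ↔ bal w = 0 ∧ ∀ k, 0 ≤ bal (w.take k) := by
  simp only [IsDyck, bal]
  constructor
  · rintro ⟨h1, h2⟩
    exact ⟨by omega, fun k => by have := h2 k; omega⟩
  · rintro ⟨h1, h2⟩
    exact ⟨by omega, fun k => by have := h2 k; omega⟩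

lemma bal_take_one_le (r : List Bool) : bal (r.take 1) ≤ 1 := by
  have h1 : (r.take 1).count true ≤ (r.take 1).length := List.count_le_length
  have h2 : (r.take 1).length ≤ 1 := by
    simp [List.length_take]
  unfold bal
  omega

/-- Characterization: the suffix after one step of the rotation is Dyck iff every
nonempty prefix of the rotation has positive balance. -/
lemma dyck_char (n : ℕ) (y : List Bool) (hlen : y.length = 2 * n + 1)
    (hcount : y.count true = n + 1) (ℓ : ℕ) :
    IsDyck ((y.rotate ℓ).drop 1) ↔
      ∀ j, 1 ≤ j → j ≤ 2 * n + 1 → 1 ≤ bal ((y.rotate ℓ).take j) := by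
  set r := y.rotate ℓ with hr
  have hfalse : y.count false = n := by
    have := count_true_add_count_false y; omega
  have hrlen : r.length = 2 * n + 1 := by rw [hr, List.length_rotate, hlen]
  have hrbal : bal r = 1 := by
    have hperm := List.rotate_perm y ℓ
    unfold bal
    rw [hperm.count_eq, hperm.count_eq, hcount, hfalse]
    push_cast; ring
  have hsplit : ∀ k, bal (r.take (1 + k)) = bal (r.take 1) + bal ((r.drop 1).take k) := by
    intro k
    rw [List.take_add, bal_append]
  have htot : bal (r.take 1) + bal (r.drop 1) = 1 := by
    rw [← bal_append, List.take_append_drop, hrbal]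
  constructor
  · intro hd
    rw [isDyck_iff_bal] at hd
    obtain ⟨h0, hpre⟩ := hd
    have ht1 : bal (r.take 1) = 1 := by omega
    intro j hj1 hjN
    have hj : j = 1 + (j - 1) := by omega
    rw [hj, hsplit, ht1]
    have := hpre (j - 1)
    omega
  · intro hQ
    rw [isDyck_iff_bal]
    have ht1 : bal (r.take 1) = 1 := by
      have h1 := hQ 1 le_rfl (by omega)
      have h2 := bal_take_one_le r
      omega
    refine ⟨by omega, fun k => ?_⟩
    by_cases hk : 1 + k ≤ 2 * n + 1
    · have := hQ (1 + k) (by omega) hk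
      have := hsplit k
      omega
    · have hlen' : (r.drop 1).length ≤ k := by
        rw [List.length_drop, hrlen]; omega
      rw [List.take_of_length_le hlen']
      omega

/-- Existence for the abstract cycle lemma, for a partial-sum function `S` with
`S (N + r) = 1 + S r`. -/
lemma exists_good (N : ℕ) (hN : 1 ≤ N) (S : ℕ → ℤ)
    (hper : ∀ r, r ≤ N → S (N + r) = 1 + S r) :
    ∃ ℓ, ℓ < N ∧ ∀ j, 1 ≤ j → j ≤ N → S ℓ + 1 ≤ S (ℓ + j) := by
  classical
  obtain ⟨i, hi, hmin⟩ := Finset.exists_min_image (Finset.range N) S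
    ⟨0, Finset.mem_range.mpr (by omega)⟩
  set m := S i with hm
  set ℓ := Nat.findGreatest (fun k => S k = m) (N - 1) with hℓ
  have hiN : i ≤ N - 1 := by
    have := Finset.mem_range.mp hi; omega
  have hSℓ : S ℓ = m := Nat.findGreatest_spec (P := fun k => S k = m) hiN hm.symm
  have hℓle : ℓ ≤ N - 1 := Nat.findGreatest_le _
  have hgt : ∀ k, ℓ < k → k ≤ N - 1 → S k ≠ m := fun k h1 h2 =>
    Nat.findGreatest_is_greatest h1 h2
  have hmin' : ∀ k, k ≤ N - 1 → m ≤ S k := fun k hk =>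
    hmin k (Finset.mem_range.mpr (by omega))
  refine ⟨ℓ, by omega, ?_⟩
  intro j hj1 hjN
  by_cases hcase : ℓ + j ≤ N - 1
  · have h1 := hgt (ℓ + j) (by omega) hcase
    have h2 := hmin' (ℓ + j) hcase
    omega
  · have hge : N ≤ ℓ + j := by omega
    set r := ℓ + j - N with hrdef
    have hrN : r ≤ N - 1 := by omega
    have heq : ℓ + j = N + r := by omega
    rw [heq, hper r (by omega)]
    have := hmin' r hrN
    omega

/-- Uniqueness for the abstract cycle lemma. -/
lemma unique_good (N : ℕ) (S : ℕ → ℤ)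
    (hper : ∀ r, r ≤ N → S (N + r) = 1 + S r)
    (ℓ₁ ℓ₂ : ℕ) (h1 : ℓ₁ < N) (h2 : ℓ₂ < N)
    (Q1 : ∀ j, 1 ≤ j → j ≤ N → S ℓ₁ + 1 ≤ S (ℓ₁ + j))
    (Q2 : ∀ j, 1 ≤ j → j ≤ N → S ℓ₂ + 1 ≤ S (ℓ₂ + j)) : ℓ₁ = ℓ₂ := by
  have key : ∀ a b : ℕ, a < N → b < N →
      (∀ j, 1 ≤ j → j ≤ N → S a + 1 ≤ S (a + j)) →
      (∀ j, 1 ≤ j → j ≤ N → S b + 1 ≤ S (b + j)) → ¬(a < b) := by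
    intro a b ha hb Qa Qb hab
    have e1 : a + (b - a) = b := by omega
    have t1 := Qa (b - a) (by omega) (by omega)
    rw [e1] at t1
    have e2 : b + (a + N - b) = N + a := by omega
    have t2 := Qb (a + N - b) (by omega) (by omega)
    rw [e2, hper a (by omega)] at t2
    omega
  rcases lt_trichotomy ℓ₁ ℓ₂ with h | h | h
  · exact absurd h (key ℓ₁ ℓ₂ h1 h2 Q1 Q2)
  · exact h
  · exact absurd h (key ℓ₂ ℓ₁ h2 h1 Q2 Q1)

/-- For any bitstring `y` of length `2n+1` with exactly `n+1` ones (`n ≥ 1`),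
there is a unique `ℓ` with `0 ≤ ℓ ≤ 2n` such that the last `2n` bits of the cyclic
left-rotation of `y` by `ℓ` positions form a Dyck word. -/
theorem unique_rotation_dyck_suffix (n : ℕ) (hn : 1 ≤ n) (y : List Bool)
    (hlen : y.length = 2 * n + 1) (hcount : y.count true = n + 1) :
    ∃! ℓ : ℕ, ℓ ≤ 2 * n ∧ IsDyck ((y.rotate ℓ).drop 1) := by
  classical
  have hfalse : y.count false = n := by
    have := count_true_add_count_false y; omega
  have hbaly : bal y = 1 := by
    unfold bal; rw [hcount, hfalse]; push_cast; ring
  set S : ℕ → ℤ := fun k => bal ((y ++ y).take k) with hSdef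
  have hper : ∀ r, r ≤ 2 * n + 1 → S (2 * n + 1 + r) = 1 + S r := by
    intro r hr
    have h1 : (y ++ y).take (2 * n + 1 + r) = y ++ y.take r := by
      rw [← hlen]; simp [List.take_append]
    have h2 : (y ++ y).take r = y.take r := by
      apply List.take_append_of_le_length; omega
    simp only [hSdef, h1, h2, bal_append, hbaly]
  have hbridge : ∀ ℓ, ℓ ≤ 2 * n → ∀ j, j ≤ 2 * n + 1 →
      bal ((y.rotate ℓ).take j) = S (ℓ + j) - S ℓ := by
    intro ℓ hℓ j hj
    have hℓlen : ℓ ≤ y.length := by omega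
    have hdropy : (y ++ y).drop ℓ = y.rotate ℓ ++ y.drop ℓ := by
      rw [List.drop_append_of_le_length hℓlen,
        List.rotate_eq_drop_append_take hℓlen, List.append_assoc,
        List.take_append_drop]
    have htake : ((y ++ y).drop ℓ).take j = (y.rotate ℓ).take j := by
      rw [hdropy]
      apply List.take_append_of_le_length
      rw [List.length_rotate, hlen]; omega
    have h1 : (y ++ y).take (ℓ + j) = (y ++ y).take ℓ ++ ((y ++ y).drop ℓ).take j :=
      List.take_add
    simp only [hSdef, h1, bal_append, htake]
    ring
  obtain ⟨ℓ, hℓN, hQ⟩ := exists_good (2 * n + 1) (by omega) S hper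
  refine ⟨ℓ, ⟨by omega, ?_⟩, ?_⟩
  · rw [dyck_char n y hlen hcount ℓ]
    intro j hj1 hjN
    rw [hbridge ℓ (by omega) j hjN]
    have := hQ j hj1 hjN
    omega
  · rintro ℓ' ⟨hℓ', hd⟩
    rw [dyck_char n y hlen hcount ℓ'] at hd
    have hQ' : ∀ j, 1 ≤ j → j ≤ 2 * n + 1 → S ℓ' + 1 ≤ S (ℓ' + j) := by
      intro j hj1 hjN
      have := hd j hj1 hjN
      rw [hbridge ℓ' hℓ' j hjN] at this
      omega
    exact unique_good (2 * n + 1) S hper ℓ' ℓ (by omega) (by omega) hQ' hQ
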